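/- Total-variation-of-angle lower bound for bending plus tension: Let N ≥ 1 be an integer, h = 1/N, let v = (v_j) be a discrete curve, and let C, σ > 0. Then for all indices j₀, j₁ with 1 ≤ j₀ ≤ j₁ ≤ N, (C/2)·Σ_{j=1}^N θ_j²·(l_j³ + l_{j+1}³)/(l_j·l_{j+1}·(l_j + l_{j+1})²) + σ·Σ_{j=1}^N 2·l_j ≥ √(2Cσ)·|arctan(d_{j₁}) − arctan(d_{j₀})|. -/

import Mathlib

open Filter MeasureTheory

noncomputable section

/-- mesh point `x_j = j·h` with `h = 1/N`. -/
def xj (N : ℕ) (j : ℤ) : ℝ := j * ((1 : ℝ) / N)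

/-- first difference quotient `d_j = (v_j − v_{j−1})/h`. -/
def dq (N : ℕ) (v : ℤ → ℝ) (j : ℤ) : ℝ := (v j - v (j - 1)) / ((1 : ℝ) / N)

/-- second difference quotient `D_j = (v_{j+1} − 2v_j + v_{j−1})/h²`. -/
def Dq (N : ℕ) (v : ℤ → ℝ) (j : ℤ) : ℝ :=
  (v (j + 1) - 2 * v j + v (j - 1)) / ((1 : ℝ) / N) ^ 2

/-- half segment length `l_j = (h/2)·√(1 + d_j²)`. -/
def lq (N : ℕ) (v : ℤ → ℝ) (j : ℤ) : ℝ :=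
  ((1 : ℝ) / N) / 2 * Real.sqrt (1 + dq N v j ^ 2)

/-- angle `θ_j` between consecutive segments. -/
def θq (N : ℕ) (v : ℤ → ℝ) (j : ℤ) : ℝ :=
  Real.arccos ((1 + dq N v j * dq N v (j + 1)) /
    (Real.sqrt (1 + dq N v j ^ 2) * Real.sqrt (1 + dq N v (j + 1) ^ 2)))

/-- discrete bending energy `B_h`. -/
def Bh (C : ℝ) (N : ℕ) (v : ℤ → ℝ) : ℝ :=
  C / 2 * ∑ j ∈ Finset.Icc (1 : ℤ) N, θq N v j ^ 2 *
    ((lq N v j ^ 3 + lq N v (j + 1) ^ 3) /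
      (lq N v j * lq N v (j + 1) * (lq N v j + lq N v (j + 1)) ^ 2))

/-- discrete tension `T_h`. -/
def Th (σ : ℝ) (N : ℕ) (v : ℤ → ℝ) : ℝ :=
  σ * ∑ j ∈ Finset.Icc (1 : ℤ) N, 2 * lq N v j

/-- a regularizer `ζ`. -/
def IsRegularizer (ζ : ℝ → ℝ) : Prop :=
  ContDiff ℝ 1 ζ ∧ (∀ t, 0 ≤ ζ t ∧ ζ t ≤ 1) ∧ (∀ t, ζ (-t) = ζ t) ∧
    (∀ t, 1 < t → ζ t = 0) ∧ AntitoneOn ζ (Set.Icc 0 1) ∧ ζ 0 = 1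

/-- discrete adhesion energy `A_{h,δ}` (with `ζ_δ(t) = ζ(t/δ)`). -/
def Ah (γ : ℝ) (ζ : ℝ → ℝ) (δ : ℝ) (ψ : ℝ → ℝ) (N : ℕ) (v : ℤ → ℝ) : ℝ :=
  γ * ∑ j ∈ Finset.Icc (1 : ℤ) N,
    ζ ((v (j - 1) - ψ (xj N (j - 1))) / δ) * ζ ((v j - ψ (xj N j)) / δ) * (2 * lq N v j)

/-- discrete penalty `P_{h,ρ}`. -/
def Ph (ρ : ℝ) (ψ : ℝ → ℝ) (N : ℕ) (v : ℤ → ℝ) : ℝ :=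
  1 / ρ * ∑ j ∈ Finset.Icc (1 : ℤ) N, max (ψ (xj N j) - v j) 0 ^ 2 * ((1 : ℝ) / N)

/-- total discrete energy `E_{h,δ,ρ}`. -/
def Eh (C σ γ : ℝ) (ζ ψ : ℝ → ℝ) (N : ℕ) (δ ρ : ℝ) (v : ℤ → ℝ) : ℝ :=
  Bh C N v + Th σ N v - Ah γ ζ δ ψ N v + Ph ρ ψ N v

/-- piecewise-affine interpolant of a discrete curve: on `[x_{j−1}, x_j]` it is
`v_{j−1} + d_j·(x − x_{j−1})`. -/
def interp (N : ℕ) (v : ℤ → ℝ) (x : ℝ) : ℝ :=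
  v (⌈x * N⌉ - 1) + dq N v ⌈x * N⌉ * (x - xj N (⌈x * N⌉ - 1))

/-- slope step function of a discrete curve: equal to `d_j` on `(x_{j−1}, x_j)`. -/
def slopeFn (N : ℕ) (v : ℤ → ℝ) (x : ℝ) : ℝ := dq N v ⌈x * N⌉

lemma sum_Icc_top {a b : ℤ} (h : a ≤ b + 1) (f : ℤ → ℝ) :
    ∑ j ∈ Finset.Icc a (b + 1), f j = (∑ j ∈ Finset.Icc a b, f j) + f (b + 1) := by
  rw [show Finset.Icc a (b + 1) = insert (b + 1) (Finset.Icc a b) by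
    ext x; simp only [Finset.mem_Icc, Finset.mem_insert]; omega]
  rw [Finset.sum_insert (by simp)]
  ring

lemma arccos_eq_abs (a b : ℝ) :
    Real.arccos ((1 + a * b) / (Real.sqrt (1 + a ^ 2) * Real.sqrt (1 + b ^ 2))) =
      |Real.arctan b - Real.arctan a| := by
  have hcos : Real.cos (Real.arctan b - Real.arctan a) =
      (1 + a * b) / (Real.sqrt (1 + a ^ 2) * Real.sqrt (1 + b ^ 2)) := by
    rw [Real.cos_sub, Real.cos_arctan, Real.cos_arctan, Real.sin_arctan, Real.sin_arctan]
    have ha : Real.sqrt (1 + a ^ 2) ≠ 0 := by positivity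
    have hb : Real.sqrt (1 + b ^ 2) ≠ 0 := by positivity
    field_simp
  rw [← hcos, ← Real.cos_abs]
  apply Real.arccos_cos (abs_nonneg _)
  have h1 := Real.arctan_lt_pi_div_two b
  have h2 := Real.neg_pi_div_two_lt_arctan b
  have h3 := Real.arctan_lt_pi_div_two a
  have h4 := Real.neg_pi_div_two_lt_arctan a
  rw [abs_sub_le_iff]
  constructor <;> nlinarith [Real.pi_pos]

lemma termwise (C σ l m θ : ℝ) (hC : 0 < C) (hσ : 0 < σ) (hl : 0 < l) (hm : 0 < m) :
    Real.sqrt (2 * C * σ) * θ ≤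
      C / 2 * (θ ^ 2 * ((l ^ 3 + m ^ 3) / (l * m * (l + m) ^ 2))) + σ * (l + m) := by
  set w : ℝ := (l ^ 3 + m ^ 3) / (l * m * (l + m) ^ 2) with hw_def
  have hw : 0 < w := by positivity
  have hws : 1 ≤ w * (l + m) := by
    rw [hw_def, div_mul_eq_mul_div, le_div_iff₀ (by positivity)]
    nlinarith [sq_nonneg (l - m), mul_pos hl hm]
  have hA : Real.sqrt (2 * C * σ) = Real.sqrt C * Real.sqrt (2 * σ) := by
    rw [← Real.sqrt_mul hC.le]; ring_nf
  have hb : Real.sqrt C ^ 2 = C := Real.sq_sqrt hC.le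
  have hc : Real.sqrt (2 * σ) ^ 2 = 2 * σ := Real.sq_sqrt (by positivity)
  rw [hA]
  have hsq : 0 ≤ C * θ ^ 2 * w ^ 2 - 2 * (Real.sqrt C * Real.sqrt (2 * σ)) * θ * w + 2 * σ := by
    have h := sq_nonneg (Real.sqrt C * θ * w - Real.sqrt (2 * σ))
    have e : (Real.sqrt C * θ * w - Real.sqrt (2 * σ)) ^ 2 =
        C * θ ^ 2 * w ^ 2 - 2 * (Real.sqrt C * Real.sqrt (2 * σ)) * θ * w + 2 * σ := by
      rw [sub_sq, mul_pow, mul_pow, hb, hc]; ring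
    linarith [e ▸ h]
  have key : Real.sqrt C * Real.sqrt (2 * σ) * θ * w ≤
      (C / 2 * (θ ^ 2 * w) + σ * (l + m)) * w := by
    nlinarith [hsq, mul_le_mul_of_nonneg_left hws hσ.le]
  exact le_of_mul_le_mul_right key hw

lemma telescope (N : ℕ) (v : ℤ → ℝ) (j₀ j₁ : ℤ) (hj : j₀ ≤ j₁) :
    |Real.arctan (dq N v j₁) - Real.arctan (dq N v j₀)| ≤
      ∑ j ∈ Finset.Icc j₀ (j₁ - 1), θq N v j := by
  refine Int.le_induction (motive := fun k _ => |Real.arctan (dq N v k) - Real.arctan (dq N v j₀)| ≤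
      ∑ j ∈ Finset.Icc j₀ (k - 1), θq N v j) ?_ ?_ j₁ hj
  · simp [Finset.Icc_eq_empty_of_lt (by omega : j₀ - 1 < j₀)]
  · intro n hmn ih
    have hθn : θq N v n = |Real.arctan (dq N v (n + 1)) - Real.arctan (dq N v n)| :=
      arccos_eq_abs _ _
    have h1 := abs_sub_le (Real.arctan (dq N v (n + 1))) (Real.arctan (dq N v n))
      (Real.arctan (dq N v j₀))
    rw [show n + 1 - 1 = (n - 1) + 1 by ring, sum_Icc_top (by omega),
      show n - 1 + 1 = n by ring]
    linarith [ih]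

lemma shift_sum (N : ℕ) (hN : 1 ≤ N) (f : ℤ → ℝ) (hf : ∀ j, f (j + N) = f j) :
    ∑ j ∈ Finset.Icc (1 : ℤ) N, f (j + 1) = ∑ j ∈ Finset.Icc (1 : ℤ) N, f j := by
  have hN' : (1 : ℤ) ≤ N := by exact_mod_cast hN
  have h1 : ∑ j ∈ Finset.Icc (1 : ℤ) N, f (j + 1) =
      ∑ j ∈ Finset.Icc (2 : ℤ) ((N : ℤ) + 1), f j := by
    rw [show ((2 : ℤ)) = 1 + 1 by ring, ← Finset.map_add_right_Icc, Finset.sum_map]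
    simp
  have h2 : ∑ j ∈ Finset.Icc (2 : ℤ) ((N : ℤ) + 1), f j =
      (∑ j ∈ Finset.Icc (2 : ℤ) N, f j) + f ((N : ℤ) + 1) := sum_Icc_top (by omega) f
  have h3 : f ((N : ℤ) + 1) = f 1 := by rw [show (N : ℤ) + 1 = 1 + N by ring, hf]
  have h4 : ∑ j ∈ Finset.Icc (1 : ℤ) N, f j = f 1 + ∑ j ∈ Finset.Icc (2 : ℤ) N, f j := by
    rw [show Finset.Icc (1 : ℤ) N = insert (1 : ℤ) (Finset.Icc 2 (N : ℤ)) by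
        ext x; simp only [Finset.mem_Icc, Finset.mem_insert]; omega,
      Finset.sum_insert (by simp)]
  rw [h1, h2, h3, h4]; ring

/-- Total-variation-of-angle lower bound for bending plus tension. -/
theorem stmt16 (N : ℕ) (hN : 1 ≤ N) (v : ℤ → ℝ) (hper : ∀ j, v (j + N) = v j)
    (C σ : ℝ) (hC : 0 < C) (hσ : 0 < σ)
    (j₀ j₁ : ℤ) (hj₀ : 1 ≤ j₀) (hj : j₀ ≤ j₁) (hj₁ : j₁ ≤ N) :
    Real.sqrt (2 * C * σ) * |Real.arctan (dq N v j₁) - Real.arctan (dq N v j₀)| ≤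
      C / 2 * ∑ j ∈ Finset.Icc (1 : ℤ) (N : ℤ),
          θq N v j ^ 2 * ((lq N v j ^ 3 + lq N v (j + 1) ^ 3) /
            (lq N v j * lq N v (j + 1) * (lq N v j + lq N v (j + 1)) ^ 2)) +
        σ * ∑ j ∈ Finset.Icc (1 : ℤ) (N : ℤ), 2 * lq N v j := by
  have hNZ : (0 : ℝ) < N := by exact_mod_cast hN
  have hdper : ∀ j, dq N v (j + N) = dq N v j := by
    intro j; unfold dq; rw [show j + (N : ℤ) - 1 = (j - 1) + N by ring, hper, hper]
  have hlper : ∀ j, lq N v (j + N) = lq N v j := by intro j; unfold lq; rw [hdper]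
  have hlpos : ∀ j, 0 < lq N v j := by intro j; unfold lq; positivity
  have hθpos : ∀ j, 0 ≤ θq N v j := fun j => Real.arccos_nonneg _
  have hshift : ∑ j ∈ Finset.Icc (1 : ℤ) N, lq N v (j + 1) =
      ∑ j ∈ Finset.Icc (1 : ℤ) N, lq N v j := shift_sum N hN _ hlper
  have e1 : ∑ j ∈ Finset.Icc (1 : ℤ) N, 2 * lq N v j =
      ∑ j ∈ Finset.Icc (1 : ℤ) N, (lq N v j + lq N v (j + 1)) := by
    rw [Finset.sum_add_distrib, hshift, ← Finset.sum_add_distrib]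
    exact Finset.sum_congr rfl fun j _ => two_mul _
  have main : Real.sqrt (2 * C * σ) * ∑ j ∈ Finset.Icc (1 : ℤ) N, θq N v j ≤
      C / 2 * ∑ j ∈ Finset.Icc (1 : ℤ) (N : ℤ),
          θq N v j ^ 2 * ((lq N v j ^ 3 + lq N v (j + 1) ^ 3) /
            (lq N v j * lq N v (j + 1) * (lq N v j + lq N v (j + 1)) ^ 2)) +
        σ * ∑ j ∈ Finset.Icc (1 : ℤ) (N : ℤ), 2 * lq N v j := by
    rw [e1, Finset.mul_sum, Finset.mul_sum, Finset.mul_sum, ← Finset.sum_add_distrib]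
    exact Finset.sum_le_sum fun j _ =>
      termwise C σ (lq N v j) (lq N v (j + 1)) (θq N v j) hC hσ (hlpos j) (hlpos (j + 1))
  have hsub : Finset.Icc j₀ (j₁ - 1) ⊆ Finset.Icc (1 : ℤ) N :=
    Finset.Icc_subset_Icc hj₀ (by omega)
  calc Real.sqrt (2 * C * σ) * |Real.arctan (dq N v j₁) - Real.arctan (dq N v j₀)|
      ≤ Real.sqrt (2 * C * σ) * ∑ j ∈ Finset.Icc j₀ (j₁ - 1), θq N v j :=
        mul_le_mul_of_nonneg_left (telescope N v j₀ j₁ hj) (Real.sqrt_nonneg _)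
    _ ≤ Real.sqrt (2 * C * σ) * ∑ j ∈ Finset.Icc (1 : ℤ) N, θq N v j :=
        mul_le_mul_of_nonneg_left
          (Finset.sum_le_sum_of_subset_of_nonneg hsub fun j _ _ => hθpos j)
          (Real.sqrt_nonneg _)
    _ ≤ _ := main


end
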